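/- Let θ ∈ Θ(T) be an ECF, η := θ − 1 (restricted to nonempty finite sets), and let g be a Bernstein function. Then for all nonempty finite A, B, C ⊆ T: g(η(A∪B)) ≤ g(η(C)) + g(η(A∪B)) and g(η(C)) + g(η(A∪B)) ≤ g(η(A∪C)) + g(η(C∪B)). In particular, writing f = g∘η, one has the triangle inequality f(A∪B) ≤ f(A∪C) + f(C∪B). -/

import Mathlib

open Finset

/-- `ψ` is negative definite (in the semigroup sense) on `(Finset T, ∪, ∅)`. -/
def NegDef {T : Type*} [DecidableEq T] (ψ : Finset T → ℝ) : Prop :=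
  ∀ n : ℕ, 2 ≤ n → ∀ (K : Fin n → Finset T) (a : Fin n → ℝ),
    (∑ j, a j) = 0 → ∑ j, ∑ k, a j * a k * ψ (K j ∪ K k) ≤ 0

/-- Membership in `Θ(T)`. -/
def IsECF {T : Type*} [DecidableEq T] (θ : Finset T → ℝ) : Prop :=
  (∀ A, 0 ≤ θ A) ∧ NegDef θ ∧ θ ∅ = 0 ∧ ∀ t : T, θ {t} = 1

/-- `g` is a Bernstein function. -/
def Bernstein (g : ℝ → ℝ) : Prop :=
  ContinuousOn g (Set.Ici 0) ∧ (∀ x ∈ Set.Ici (0 : ℝ), 0 ≤ g x) ∧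
  ∀ n : ℕ, 2 ≤ n → ∀ r : Fin n → ℝ, (∀ i, 0 ≤ r i) → ∀ a : Fin n → ℝ,
    (∑ i, a i) = 0 → ∑ i, ∑ j, a i * a j * g (r i + r j) ≤ 0

open Finset

section Aux

variable {T : Type*} [DecidableEq T]

lemma negdef_pair {ψ : Finset T → ℝ} (h : NegDef ψ) (P Q : Finset T)
    (hPQ : P ∪ Q = Q) : ψ P ≤ ψ Q := by
  have hQP : Q ∪ P = Q := by rw [Finset.union_comm]; exact hPQ
  have := h 2 le_rfl ![P, Q] ![1, -1] (by simp [Fin.sum_univ_two])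
  simp [Fin.sum_univ_two, hPQ, hQP, Finset.union_self] at this
  linarith

lemma negdef_four {ψ : Finset T → ℝ} (h : NegDef ψ) (P Q R S : Finset T)
    (hPQ : P ∪ Q = Q) (hPR : P ∪ R = R) (hPS : P ∪ S = S)
    (hQR : Q ∪ R = S) (hQS : Q ∪ S = S) (hRS : R ∪ S = S) :
    ψ P + ψ S ≤ ψ Q + ψ R := by
  have hQP : Q ∪ P = Q := by rw [Finset.union_comm]; exact hPQ
  have hRP : R ∪ P = R := by rw [Finset.union_comm]; exact hPR
  have hSP : S ∪ P = S := by rw [Finset.union_comm]; exact hPS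
  have hRQ : R ∪ Q = S := by rw [Finset.union_comm]; exact hQR
  have hSQ : S ∪ Q = S := by rw [Finset.union_comm]; exact hQS
  have hSR : S ∪ R = S := by rw [Finset.union_comm]; exact hRS
  have := h 4 (by norm_num) ![P, Q, R, S] ![-1, 1, 1, -1]
    (by simp [Fin.sum_univ_four])
  simp [Fin.sum_univ_four, hPQ, hPR, hPS, hQR, hQS, hRS, hQP, hRP, hSP, hRQ,
    hSQ, hSR, Finset.union_self] at this
  linarith

end Aux

section Conc

lemma bernstein_midpoint {g : ℝ → ℝ} (hg : Bernstein g) {x y : ℝ}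
    (hx : 0 ≤ x) (hy : 0 ≤ y) : g x + g y ≤ 2 * g ((x + y) / 2) := by
  have := hg.2.2 2 le_rfl ![x / 2, y / 2]
    (by intro i; fin_cases i <;> simp <;> linarith) ![1, -1]
    (by simp [Fin.sum_univ_two])
  simp [Fin.sum_univ_two] at this
  rw [show x / 2 + y / 2 = (x + y) / 2 by ring,
    show y / 2 + x / 2 = (x + y) / 2 by ring] at this
  linarith

lemma dyadic_concave {g : ℝ → ℝ}
    (hm : ∀ x, 0 ≤ x → ∀ y, 0 ≤ y → g x + g y ≤ 2 * g ((x + y) / 2)) :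
    ∀ n k : ℕ, k ≤ 2 ^ n → ∀ x y : ℝ, 0 ≤ x → 0 ≤ y →
      ((k : ℝ) / 2 ^ n) * g x + (1 - (k : ℝ) / 2 ^ n) * g y ≤
        g (((k : ℝ) / 2 ^ n) * x + (1 - (k : ℝ) / 2 ^ n) * y) := by
  intro n
  induction n with
  | zero =>
    intro k hk x y hx hy
    interval_cases k <;> norm_num
  | succ n ih =>
    intro k hk x y hx hy
    have h2 : (2 : ℕ) ^ (n + 1) = 2 * 2 ^ n := by ring
    set i := k / 2 with hidef
    set j := k - k / 2 with hjdef
    have hij : i + j = k := by omega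
    have hi : i ≤ 2 ^ n := by omega
    have hj : j ≤ 2 ^ n := by omega
    have hpow : (0:ℝ) < 2 ^ n := by positivity
    have hiR : (i : ℝ) / 2 ^ n ≤ 1 := by
      rw [div_le_one hpow]; exact_mod_cast Nat.cast_le.mpr hi
    have hjR : (j : ℝ) / 2 ^ n ≤ 1 := by
      rw [div_le_one hpow]; exact_mod_cast Nat.cast_le.mpr hj
    have hiR0 : (0:ℝ) ≤ (i : ℝ) / 2 ^ n := by positivity
    have hjR0 : (0:ℝ) ≤ (j : ℝ) / 2 ^ n := by positivity
    set Pi := ((i : ℝ) / 2 ^ n) * x + (1 - (i : ℝ) / 2 ^ n) * y with hPi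
    set Pj := ((j : ℝ) / 2 ^ n) * x + (1 - (j : ℝ) / 2 ^ n) * y with hPj
    have hPi0 : 0 ≤ Pi := by
      apply add_nonneg (mul_nonneg hiR0 hx) (mul_nonneg (by linarith) hy)
    have hPj0 : 0 ≤ Pj := by
      apply add_nonneg (mul_nonneg hjR0 hx) (mul_nonneg (by linarith) hy)
    have hmid := hm Pi hPi0 Pj hPj0
    have hihj := ih i hi x y hx hy
    have hjhj := ih j hj x y hx hy
    have hijR : (i : ℝ) + (j : ℝ) = (k : ℝ) := by exact_mod_cast hij
    have hpowR : (2 : ℝ) ^ (n + 1) = 2 * 2 ^ n := by ring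
    have hkey : (k : ℝ) / 2 ^ (n + 1) = ((i : ℝ) / 2 ^ n + (j : ℝ) / 2 ^ n) / 2 := by
      rw [hpowR, ← hijR, ← add_div, div_div, mul_comm ((2:ℝ) ^ n) 2]
    have hpt : (Pi + Pj) / 2 =
        ((k : ℝ) / 2 ^ (n + 1)) * x + (1 - (k : ℝ) / 2 ^ (n + 1)) * y := by
      rw [hkey, hPi, hPj]; ring
    rw [← hpt, hkey]
    linarith

lemma concave_of_bernstein {g : ℝ → ℝ} (hg : Bernstein g) :
    ConcaveOn ℝ (Set.Ici 0) g := by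
  refine ⟨convex_Ici 0, ?_⟩
  intro x hx y hy a b ha hb hab
  simp only [smul_eq_mul]
  have hx0 : (0:ℝ) ≤ x := hx
  have hy0 : (0:ℝ) ≤ y := hy
  have ha1 : a ≤ 1 := by linarith
  have hb' : b = 1 - a := by linarith
  subst hb'
  set s : ℕ → ℝ := fun n => (⌊a * 2 ^ n⌋₊ : ℝ) / 2 ^ n with hs
  have hsk : ∀ n, ⌊a * 2 ^ n⌋₊ ≤ 2 ^ n := by
    intro n
    have : a * 2 ^ n ≤ ((2 ^ n : ℕ) : ℝ) := by
      push_cast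
      nlinarith [pow_pos (by norm_num : (0:ℝ) < 2) n]
    calc ⌊a * 2 ^ n⌋₊ ≤ ⌊((2 ^ n : ℕ) : ℝ)⌋₊ := Nat.floor_le_floor this
      _ = 2 ^ n := Nat.floor_natCast _
  have hs0 : ∀ n, 0 ≤ s n := by intro n; positivity
  have hs1 : ∀ n, s n ≤ 1 := by
    intro n
    rw [hs]
    have hpow : (0:ℝ) < 2 ^ n := by positivity
    rw [div_le_one hpow]
    exact_mod_cast Nat.cast_le.mpr (hsk n)
  have hstend : Filter.Tendsto s Filter.atTop (nhds a) := by
    have hlow : ∀ n, a - (1 / 2 : ℝ) ^ n ≤ s n := by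
      intro n
      have hpow : (0:ℝ) < 2 ^ n := by positivity
      have h1 : a * 2 ^ n < ⌊a * 2 ^ n⌋₊ + 1 := Nat.lt_floor_add_one _
      rw [hs]
      rw [div_pow, one_pow]
      rw [sub_le_iff_le_add, ← add_div, le_div_iff₀ hpow]
      linarith
    have hhigh : ∀ n, s n ≤ a := by
      intro n
      have hpow : (0:ℝ) < 2 ^ n := by positivity
      have h1 : (⌊a * 2 ^ n⌋₊ : ℝ) ≤ a * 2 ^ n :=
        Nat.floor_le (by positivity)
      rw [hs, div_le_iff₀ hpow]
      exact h1
    have hl : Filter.Tendsto (fun n : ℕ => a - (1 / 2 : ℝ) ^ n)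
        Filter.atTop (nhds a) := by
      have := tendsto_pow_atTop_nhds_zero_of_lt_one
        (by norm_num : (0:ℝ) ≤ 1 / 2) (by norm_num : (1/2:ℝ) < 1)
      simpa using (tendsto_const_nhds (x := a)).sub this
    exact tendsto_of_tendsto_of_tendsto_of_le_of_le hl tendsto_const_nhds
      hlow hhigh
  have hineq : ∀ n, s n * g x + (1 - s n) * g y ≤
      g (s n * x + (1 - s n) * y) := by
    intro n
    have hmid : ∀ x, 0 ≤ x → ∀ y, 0 ≤ y → g x + g y ≤ 2 * g ((x + y) / 2) :=
      fun u hu v hv => bernstein_midpoint hg hu hv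
    exact dyadic_concave hmid n _ (hsk n) x y hx0 hy0
  set P : ℕ → ℝ := fun n => s n * x + (1 - s n) * y with hP
  have hPtend : Filter.Tendsto P Filter.atTop (nhds (a * x + (1 - a) * y)) := by
    apply Filter.Tendsto.add
    · exact hstend.mul_const x
    · exact ((tendsto_const_nhds.sub hstend).mul_const y)
  have hPmem : ∀ n, P n ∈ Set.Ici (0:ℝ) := by
    intro n
    have := hs0 n; have := hs1 n
    exact add_nonneg (mul_nonneg (hs0 n) hx0) (mul_nonneg (by linarith) hy0)
  have hmem : a * x + (1 - a) * y ∈ Set.Ici (0:ℝ) :=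
    add_nonneg (mul_nonneg ha hx0) (mul_nonneg (by linarith) hy0)
  have hgc : Filter.Tendsto (fun n => g (P n)) Filter.atTop
      (nhds (g (a * x + (1 - a) * y))) := by
    have hcw : ContinuousWithinAt g (Set.Ici 0) (a * x + (1 - a) * y) :=
      hg.1 _ hmem
    apply hcw.tendsto.comp
    apply tendsto_nhdsWithin_of_tendsto_nhds_of_eventually_within _ hPtend
    exact Filter.Eventually.of_forall hPmem
  have hlhs : Filter.Tendsto (fun n => s n * g x + (1 - s n) * g y)
      Filter.atTop (nhds (a * g x + (1 - a) * g y)) := by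
    apply Filter.Tendsto.add
    · exact hstend.mul_const _
    · exact ((tendsto_const_nhds.sub hstend).mul_const _)
  exact le_of_tendsto_of_tendsto' hlhs hgc hineq

end Conc

lemma mono_of_concave {g : ℝ → ℝ} (hconc : ConcaveOn ℝ (Set.Ici 0) g)
    (hnn : ∀ x ∈ Set.Ici (0:ℝ), 0 ≤ g x) :
    ∀ x y : ℝ, 0 ≤ x → x ≤ y → g x ≤ g y := by
  intro x y hx hxy
  rcases eq_or_lt_of_le hxy with rfl | hlt
  · exact le_rfl
  by_contra hgt
  push_neg at hgt
  have hgx0 : 0 ≤ g x := hnn x hx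
  have hgy0 : 0 ≤ g y := hnn y (le_trans hx hxy)
  set t := g x - g y with ht
  have htpos : 0 < t := by linarith
  set b := t / (g x + 1) with hb
  have hb0 : 0 < b := div_pos htpos (by linarith)
  have hb1 : b ≤ 1 := by
    rw [hb, div_le_one (by linarith)]; linarith
  set z := x + (y - x) / b with hz
  have hz0 : (0:ℝ) ≤ z := by
    rw [hz]; exact add_nonneg hx (div_nonneg (by linarith) hb0.le)
  have hpt : (1 - b) * x + b * z = y := by
    rw [hz]; field_simp; ring
  have hcc := hconc.2 (Set.mem_Ici.mpr hx) (Set.mem_Ici.mpr hz0)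
    (by linarith : (0:ℝ) ≤ 1 - b) hb0.le (by ring)
  simp only [smul_eq_mul] at hcc
  rw [hpt] at hcc
  have hgz : 0 ≤ g z := hnn z hz0
  have hbe : b * (g x + 1) = t := by
    rw [hb]; field_simp
  nlinarith [mul_nonneg hb0.le hgz]

lemma chord_ineq {g : ℝ → ℝ} (hconc : ConcaveOn ℝ (Set.Ici 0) g)
    (hmono : ∀ x y : ℝ, 0 ≤ x → x ≤ y → g x ≤ g y)
    {u v w z : ℝ} (hu : 0 ≤ u) (huv : u ≤ v) (hvz : v ≤ z)
    (hsum : u + z ≤ v + w) : g u + g z ≤ g v + g w := by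
  have huz : u ≤ z := le_trans huv hvz
  rcases eq_or_lt_of_le huz with rfl | hlt
  · have hvu : v = u := le_antisymm hvz huv
    have hw : u ≤ w := by linarith
    have := hmono u w hu hw
    rw [hvu]
    linarith
  · have hz0 : (0:ℝ) ≤ z := le_trans hu huz
    have hd : (0:ℝ) < z - u := by linarith
    set l := (z - v) / (z - u) with hl
    have hl0 : 0 ≤ l := div_nonneg (by linarith) hd.le
    have hl1 : l ≤ 1 := by
      rw [hl, div_le_one hd]; linarith
    have hpt1 : l * u + (1 - l) * z = v := by
      rw [hl]; field_simp; ring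
    have hpt2 : (1 - l) * u + l * z = u + z - v := by
      rw [hl]; field_simp; ring
    have h1 := hconc.2 (Set.mem_Ici.mpr hu) (Set.mem_Ici.mpr hz0) hl0
      (by linarith : (0:ℝ) ≤ 1 - l) (by ring)
    simp only [smul_eq_mul] at h1
    rw [hpt1] at h1
    have h2 := hconc.2 (Set.mem_Ici.mpr hu) (Set.mem_Ici.mpr hz0)
      (by linarith : (0:ℝ) ≤ 1 - l) hl0 (by ring)
    simp only [smul_eq_mul] at h2
    rw [hpt2] at h2
    have h3 : g (u + z - v) ≤ g w := hmono _ _ (by linarith) (by linarith)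
    linarith


/-- Triangle inequalities: for an ECF `θ`, `η := θ − 1` and a Bernstein
function `g`, one has `g∘η(A∪B) ≤ g∘η(C) + g∘η(A∪B) ≤ g∘η(A∪C) + g∘η(C∪B)`,
and in particular `g∘η(A∪B) ≤ g∘η(A∪C) + g∘η(C∪B)`. -/
theorem Bernstein_triangle_inequalities {T : Type*} [DecidableEq T]
    (θ : Finset T → ℝ) (hθ : IsECF θ) (g : ℝ → ℝ) (hg : Bernstein g)
    (η : Finset T → ℝ) (hη : ∀ A : Finset T, A.Nonempty → η A = θ A - 1) :
    ∀ A B C : Finset T, A.Nonempty → B.Nonempty → C.Nonempty →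
      g (η (A ∪ B)) ≤ g (η C) + g (η (A ∪ B)) ∧
      g (η C) + g (η (A ∪ B)) ≤ g (η (A ∪ C)) + g (η (C ∪ B)) ∧
      g (η (A ∪ B)) ≤ g (η (A ∪ C)) + g (η (C ∪ B)) := by
  intro A B C hA hB hC
  obtain ⟨hθnn, hND, hθe, hθs⟩ := hθ
  have hconc := concave_of_bernstein hg
  have hmono := mono_of_concave hconc hg.2.1
  have hgnn := hg.2.1
  -- θ is at least 1 on nonempty sets
  have hone : ∀ D : Finset T, D.Nonempty → 1 ≤ θ D := by
    intro D hD
    obtain ⟨t, ht⟩ := hD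
    have := negdef_pair hND {t} D
      (Finset.union_eq_right.mpr (Finset.singleton_subset_iff.mpr ht))
    rw [hθs t] at this
    exact this
  -- nonemptiness of all relevant unions
  have hAB : (A ∪ B).Nonempty := hA.mono Finset.subset_union_left
  have hAC : (A ∪ C).Nonempty := hA.mono Finset.subset_union_left
  have hCB : (C ∪ B).Nonempty := hC.mono Finset.subset_union_left
  have hABC : (A ∪ B ∪ C).Nonempty := hAB.mono Finset.subset_union_left
  -- η values
  have eC := hη C hC
  have eAB := hη (A ∪ B) hAB
  have eAC := hη (A ∪ C) hAC
  have eCB := hη (C ∪ B) hCB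
  have eABC := hη (A ∪ B ∪ C) hABC
  have hCB' : C ∪ B = B ∪ C := Finset.union_comm C B
  -- nonnegativity of η's
  have nC : (0:ℝ) ≤ η C := by rw [eC]; linarith [hone C hC]
  have nAB : (0:ℝ) ≤ η (A ∪ B) := by rw [eAB]; linarith [hone _ hAB]
  have nAC : (0:ℝ) ≤ η (A ∪ C) := by rw [eAC]; linarith [hone _ hAC]
  have nCB : (0:ℝ) ≤ η (C ∪ B) := by rw [eCB]; linarith [hone _ hCB]
  have nABC : (0:ℝ) ≤ η (A ∪ B ∪ C) := by rw [eABC]; linarith [hone _ hABC]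
  -- monotonicity facts for θ
  have mAB : θ (A ∪ B) ≤ θ (A ∪ B ∪ C) :=
    negdef_pair hND _ _ (Finset.union_eq_right.mpr Finset.subset_union_left)
  have mC_AC : θ C ≤ θ (A ∪ C) :=
    negdef_pair hND _ _ (Finset.union_eq_right.mpr Finset.subset_union_right)
  have mAC_ABC : θ (A ∪ C) ≤ θ (A ∪ B ∪ C) := by
    apply negdef_pair hND
    apply Finset.union_eq_right.mpr
    intro x hx
    simp only [Finset.mem_union] at hx ⊢
    tauto
  -- second difference inequality
  have hsecond : θ C + θ (A ∪ B ∪ C) ≤ θ (A ∪ C) + θ (B ∪ C) := by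
    apply negdef_four hND C (A ∪ C) (B ∪ C) (A ∪ B ∪ C)
    · exact Finset.union_eq_right.mpr Finset.subset_union_right
    · exact Finset.union_eq_right.mpr Finset.subset_union_right
    · exact Finset.union_eq_right.mpr Finset.subset_union_right
    · ext x; simp only [Finset.mem_union]; tauto
    · ext x; simp only [Finset.mem_union]; tauto
    · ext x; simp only [Finset.mem_union]; tauto
  -- main chord inequality
  have key : g (η C) + g (η (A ∪ B ∪ C)) ≤ g (η (A ∪ C)) + g (η (C ∪ B)) := by
    apply chord_ineq hconc hmono nC
    · rw [eC, eAC]; linarith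
    · rw [eAC, eABC]; linarith
    · rw [eC, eABC, eAC, eCB, hCB']; linarith
  have hstep : g (η (A ∪ B)) ≤ g (η (A ∪ B ∪ C)) := by
    apply hmono _ _ nAB
    rw [eAB, eABC]; linarith
  have h0 : 0 ≤ g (η C) := hgnn _ nC
  refine ⟨by linarith, by linarith, by linarith⟩
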